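/- arXiv:2402.06033 — 8 statements merged into one kernel-verified Lean document; each statement's English description precedes it below -/
import Mathlib

section
/- Let L > 0 and let {z^k} satisfy z^{k+1} = (1/(k+2)) z^0 + ((k+1)/(k+2)) z^k - ((k+1)/(L(k+2))) \tilde{z}^k. Then for k ≥ 1, ‖z^{k+1} - z^k‖² ≤ (2(k+1)²/(L²(k+2)²)) ‖\tilde{z}^k‖² + (2k/(L²(k+1)²(k+2)²)) Σ_{i=0}^{k-1} (i+1)² ‖\tilde{z}^i‖², and for k = 0, ‖z^1 - z^0‖² = (1/(4L²)) ‖\tilde{z}^0‖². -/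
open scoped RealInnerProductSpace

open Finset in
lemma aux_key {Z : Type*} [NormedAddCommGroup Z] [InnerProductSpace ℝ Z]
    (L : ℝ) (hL : 0 < L) (z ztil : ℕ → Z)
    (hrec : ∀ k : ℕ, z (k + 1) = (1 / ((k : ℝ) + 2)) • z 0 + (((k : ℝ) + 1) / ((k : ℝ) + 2)) • z k
      - (((k : ℝ) + 1) / (L * ((k : ℝ) + 2))) • ztil k) :
    ∀ k : ℕ, ((k : ℝ) + 1) • (z k - z 0)
      = (-(1/L)) • ∑ i ∈ range k, ((i : ℝ) + 1) • ztil i := by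
  intro k
  induction k with
  | zero => simp
  | succ k ih =>
    have hk2 : ((k : ℝ) + 2) ≠ 0 := by positivity
    have hLne : L ≠ 0 := ne_of_gt hL
    have ih' : (∑ i ∈ range k, ((i : ℝ) + 1) • ztil i)
        = (-L) • (((k : ℝ) + 1) • (z k - z 0)) := by
      rw [ih, smul_smul]
      field_simp
      rw [one_smul]
    rw [hrec k, sum_range_succ, ih']
    push_cast
    match_scalars <;> field_simp <;> ring

theorem stmt_4 {Z : Type*} [NormedAddCommGroup Z] [InnerProductSpace ℝ Z]
    [FiniteDimensional ℝ Z]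
    (L : ℝ) (hL : 0 < L) (z ztil : ℕ → Z)
    (hrec : ∀ k : ℕ, z (k + 1) = (1 / ((k : ℝ) + 2)) • z 0 + (((k : ℝ) + 1) / ((k : ℝ) + 2)) • z k
      - (((k : ℝ) + 1) / (L * ((k : ℝ) + 2))) • ztil k) :
    ‖z 1 - z 0‖ ^ 2 = (1 / (4 * L ^ 2)) * ‖ztil 0‖ ^ 2 ∧
    ∀ k : ℕ, 1 ≤ k →
      ‖z (k + 1) - z k‖ ^ 2 ≤
        (2 * ((k : ℝ) + 1) ^ 2 / (L ^ 2 * ((k : ℝ) + 2) ^ 2)) * ‖ztil k‖ ^ 2 +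
          (2 * (k : ℝ) / (L ^ 2 * ((k : ℝ) + 1) ^ 2 * ((k : ℝ) + 2) ^ 2)) *
            ∑ i ∈ Finset.range k, ((i : ℝ) + 1) ^ 2 * ‖ztil i‖ ^ 2 := by
  have hLne : L ≠ 0 := ne_of_gt hL
  constructor
  · have h01 : z 1 - z 0 = (-(1/(2*L))) • ztil 0 := by
      have := hrec 0
      push_cast at this
      rw [this]
      match_scalars <;> field_simp <;> ring
    rw [h01, norm_smul, Real.norm_eq_abs, abs_neg,
      abs_of_pos (by positivity : (0:ℝ) < 1/(2*L)), mul_pow]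
    rw [show ((1:ℝ)/(2*L))^2 = 1/(4*L^2) by field_simp; ring]
  · intro k hk
    have hk2 : (0:ℝ) < (k : ℝ) + 2 := by positivity
    have hk1 : (0:ℝ) < (k : ℝ) + 1 := by positivity
    set S : Z := ∑ i ∈ Finset.range k, ((i : ℝ) + 1) • ztil i with hS
    have ih' : S = (-L) • (((k : ℝ) + 1) • (z k - z 0)) := by
      rw [hS, aux_key L hL z ztil hrec k, smul_smul]
      field_simp
      rw [one_smul]
    have hd : z (k+1) - z k
        = (1/(L*(((k:ℝ)+1)*((k:ℝ)+2)))) • S - (((k:ℝ)+1)/(L*((k:ℝ)+2))) • ztil k := by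
      rw [hrec k, ih']
      match_scalars <;> field_simp <;> ring
    set c1 : ℝ := 1/(L*(((k:ℝ)+1)*((k:ℝ)+2))) with hc1def
    set c2 : ℝ := ((k:ℝ)+1)/(L*((k:ℝ)+2)) with hc2def
    have hc1 : 0 < c1 := by rw [hc1def]; positivity
    have hc2 : 0 < c2 := by rw [hc2def]; positivity
    have hnd : ‖z (k+1) - z k‖ ≤ c1 * ‖S‖ + c2 * ‖ztil k‖ := by
      rw [hd]
      refine (norm_sub_le _ _).trans ?_
      rw [norm_smul, norm_smul, Real.norm_eq_abs, Real.norm_eq_abs,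
        abs_of_pos hc1, abs_of_pos hc2]
    have hSb : ‖S‖ ≤ ∑ i ∈ Finset.range k, (((i:ℝ)+1) * ‖ztil i‖) := by
      refine (norm_sum_le _ _).trans (le_of_eq ?_)
      refine Finset.sum_congr rfl fun i _ => ?_
      rw [norm_smul, Real.norm_eq_abs, abs_of_pos (by positivity)]
    have hCS := sq_sum_le_card_mul_sum_sq (s := Finset.range k)
      (f := fun i => ((i:ℝ)+1) * ‖ztil i‖)
    rw [Finset.card_range] at hCS
    have hS2 : ‖S‖^2 ≤ (k:ℝ) * ∑ i ∈ Finset.range k, ((i:ℝ)+1)^2 * ‖ztil i‖^2 := by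
      calc ‖S‖^2 ≤ (∑ i ∈ Finset.range k, (((i:ℝ)+1) * ‖ztil i‖))^2 := by
            apply pow_le_pow_left₀ (norm_nonneg _) hSb
        _ ≤ (k:ℝ) * ∑ i ∈ Finset.range k, (((i:ℝ)+1) * ‖ztil i‖)^2 := hCS
        _ = (k:ℝ) * ∑ i ∈ Finset.range k, ((i:ℝ)+1)^2 * ‖ztil i‖^2 := by
            congr 1; exact Finset.sum_congr rfl fun i _ => by ring
    have hstep : ‖z (k+1) - z k‖^2 ≤ 2*c2^2*‖ztil k‖^2 + 2*c1^2*‖S‖^2 := by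
      have h1 : ‖z (k+1) - z k‖^2 ≤ (c1 * ‖S‖ + c2 * ‖ztil k‖)^2 :=
        pow_le_pow_left₀ (norm_nonneg _) hnd 2
      nlinarith [sq_nonneg (c1 * ‖S‖ - c2 * ‖ztil k‖)]
    refine hstep.trans ?_
    have hco1 : 2*c2^2 = 2 * ((k : ℝ) + 1) ^ 2 / (L ^ 2 * ((k : ℝ) + 2) ^ 2) := by
      rw [hc2def]; field_simp
    have hco2 : 2*c1^2 * ((k:ℝ) * ∑ i ∈ Finset.range k, ((i:ℝ)+1)^2 * ‖ztil i‖^2)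
        = (2 * (k : ℝ) / (L ^ 2 * ((k : ℝ) + 1) ^ 2 * ((k : ℝ) + 2) ^ 2)) *
            ∑ i ∈ Finset.range k, ((i : ℝ) + 1) ^ 2 * ‖ztil i‖ ^ 2 := by
      rw [hc1def]; field_simp
    rw [← hco1, ← hco2]
    have := mul_le_mul_of_nonneg_left hS2 (by positivity : (0:ℝ) ≤ 2*c1^2)
    linarith
end

section
/- Let G : Z → Z be (1/L)-co-coercive with L > 0, i.e., ⟨G(z₁) - G(z₂), z₁ - z₂⟩ ≥ (1/L)‖G(z₁) - G(z₂)‖² for all z₁, z₂. Let {z^k} satisfy z^{k+1} = β_k z^0 + (1-β_k) z^k - ((1-β_k)/L) \tilde{z}^k with β_k ∈ (0,1). Then for all k ≥ 0: (1/(2L))‖G(z^{k+1})‖² - (β_k/(1-β_k))⟨G(z^{k+1}), z^0 - z^{k+1}⟩ ≤ ((1-2β_k)/(2L))‖G(z^k)‖² - β_k ⟨G(z^k), z^0 - z^k⟩ + (β_k/L)⟨G(z^k), G(z^k) - \tilde{z}^k⟩ + (1/(2L))‖G(z^k) - \tilde{z}^k‖². -/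
open scoped RealInnerProductSpace

theorem stmt_5 {Z : Type*} [NormedAddCommGroup Z] [InnerProductSpace ℝ Z]
    [FiniteDimensional ℝ Z]
    (L : ℝ) (hL : 0 < L) (G : Z → Z)
    (hG : ∀ z₁ z₂ : Z, ⟪G z₁ - G z₂, z₁ - z₂⟫ ≥ (1 / L) * ‖G z₁ - G z₂‖ ^ 2)
    (z ztil : ℕ → Z) (β : ℕ → ℝ)
    (hβ : ∀ k, β k ∈ Set.Ioo (0 : ℝ) 1)
    (hrec : ∀ k, z (k + 1) = β k • z 0 + (1 - β k) • z k - ((1 - β k) / L) • ztil k) :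
    ∀ k : ℕ,
      (1 / (2 * L)) * ‖G (z (k + 1))‖ ^ 2 -
          (β k / (1 - β k)) * ⟪G (z (k + 1)), z 0 - z (k + 1)⟫ ≤
        ((1 - 2 * β k) / (2 * L)) * ‖G (z k)‖ ^ 2 - β k * ⟪G (z k), z 0 - z k⟫ +
          (β k / L) * ⟪G (z k), G (z k) - ztil k⟫ +
          (1 / (2 * L)) * ‖G (z k) - ztil k‖ ^ 2 := by
  intro k
  obtain ⟨hβ0, hβ1⟩ := hβ k
  have hL' : L ≠ 0 := hL.ne'
  have hβ1' : (1 : ℝ) - β k ≠ 0 := by linarith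
  have hz1 : z 0 - z (k + 1) = (1 - β k) • (z 0 - z k) + ((1 - β k) / L) • ztil k := by
    rw [hrec k]; module
  have hz2 : z (k + 1) - z k = β k • (z 0 - z k) - ((1 - β k) / L) • ztil k := by
    rw [hrec k]; module
  have hcc := hG (z (k + 1)) (z k)
  rw [hz2] at hcc
  set a := G (z (k + 1)) with ha
  set b := G (z k) with hb
  set w := ztil k with hw
  set u := z 0 - z k with hu
  have e1 : ⟪a - b, β k • u - ((1 - β k) / L) • w⟫ =
      β k * ⟪a, u⟫ - ((1 - β k) / L) * ⟪a, w⟫ - β k * ⟪b, u⟫ + ((1 - β k) / L) * ⟪b, w⟫ := by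
    simp only [inner_sub_left, inner_sub_right, real_inner_smul_right]
    ring
  have e2 : ‖a - b‖ ^ 2 = ‖a‖ ^ 2 - 2 * ⟪a, b⟫ + ‖b‖ ^ 2 := norm_sub_sq_real a b
  have e3 : ‖b - w‖ ^ 2 = ‖b‖ ^ 2 - 2 * ⟪b, w⟫ + ‖w‖ ^ 2 := norm_sub_sq_real b w
  have e4 : ⟪b, b - w⟫ = ‖b‖ ^ 2 - ⟪b, w⟫ := by
    simp [inner_sub_right, real_inner_self_eq_norm_sq]
  have e5 : ⟪a, z 0 - z (k + 1)⟫ = (1 - β k) * ⟪a, u⟫ + ((1 - β k) / L) * ⟪a, w⟫ := by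
    rw [hz1]; simp [inner_add_right, real_inner_smul_right]
  have e6 : β k / (1 - β k) * ((1 - β k) * ⟪a, u⟫ + ((1 - β k) / L) * ⟪a, w⟫) =
      β k * ⟪a, u⟫ + (β k / L) * ⟪a, w⟫ := by
    field_simp
  have hsq0 : (0 : ℝ) ≤ ‖a - (2 : ℝ) • b + w‖ ^ 2 := sq_nonneg _
  have hexp : ‖a - (2 : ℝ) • b + w‖ ^ 2 =
      ‖a‖ ^ 2 + 4 * ‖b‖ ^ 2 + ‖w‖ ^ 2 - 4 * ⟪a, b⟫ + 2 * ⟪a, w⟫ - 4 * ⟪b, w⟫ := by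
    have hab : a - (2 : ℝ) • b + w = (a - b) - (b - w) := by module
    have hcross : ⟪a - b, b - w⟫ = ⟪a, b⟫ - ⟪a, w⟫ - ‖b‖ ^ 2 + ⟪b, w⟫ := by
      simp only [inner_sub_left, inner_sub_right, real_inner_self_eq_norm_sq]
      ring
    rw [hab, norm_sub_sq_real, e2, e3, hcross]
    ring
  rw [hexp] at hsq0
  have hsq : (0 : ℝ) ≤ 1 / (2 * L) *
      (‖a‖ ^ 2 + 4 * ‖b‖ ^ 2 + ‖w‖ ^ 2 - 4 * ⟪a, b⟫ + 2 * ⟪a, w⟫ - 4 * ⟪b, w⟫) :=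
    mul_nonneg (by positivity) hsq0
  rw [e1, e2] at hcc
  rw [e5, e6, e4, e3]
  have hcc' : β k * ⟪a, u⟫ - ((1 - β k) / L) * ⟪a, w⟫ - β k * ⟪b, u⟫ + ((1 - β k) / L) * ⟪b, w⟫
      ≥ (1 / L) * (‖a‖ ^ 2 - 2 * ⟪a, b⟫ + ‖b‖ ^ 2) := hcc
  have key : ((1 - 2 * β k) / (2 * L)) * ‖b‖ ^ 2 - β k * ⟪b, u⟫ +
        (β k / L) * (‖b‖ ^ 2 - ⟪b, w⟫) +
        (1 / (2 * L)) * (‖b‖ ^ 2 - 2 * ⟪b, w⟫ + ‖w‖ ^ 2) -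
        ((1 / (2 * L)) * ‖a‖ ^ 2 - (β k * ⟪a, u⟫ + β k / L * ⟪a, w⟫)) =
      (β k * ⟪a, u⟫ - ((1 - β k) / L) * ⟪a, w⟫ - β k * ⟪b, u⟫ + ((1 - β k) / L) * ⟪b, w⟫
        - 1 / L * (‖a‖ ^ 2 - 2 * ⟪a, b⟫ + ‖b‖ ^ 2)) +
      1 / (2 * L) * (‖a‖ ^ 2 + 4 * ‖b‖ ^ 2 + ‖w‖ ^ 2 - 4 * ⟪a, b⟫ + 2 * ⟪a, w⟫ - 4 * ⟪b, w⟫) := by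
    field_simp
    ring
  linarith [key, hcc', hsq]
end

section
/- Let G : Z → Z be (1/L)-co-coercive with L > 0 and let {z^k} satisfy the inexact Halpern iteration z^{k+1} = (1/(k+2)) z^0 + ((k+1)/(k+2)) z^k - ((k+1)/(L(k+2))) \tilde{z}^k. Define the potential L_k := (k(k+1)/(2L))‖G(z^k)‖² - (k+1)⟨G(z^k), z^0 - z^k⟩. Then for all k ≥ 0, L_{k+1} ≤ L_k + (1/(12L))‖G(z^k)‖² + (4(k+1)²/L)‖G(z^k) - \tilde{z}^k‖². -/
open scoped RealInnerProductSpace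

set_option maxHeartbeats 2000000 in
private lemma key_ineq (L K na nb ne nab pa0 pak pb0 pbk pab pae pbe I1 : ℝ)
    (hL : 0 < L) (hK : 0 ≤ K)
    (hns : nab^2 = na^2 - 2*pab + nb^2)
    (hC : (K+2) * nab^2 ≤ L * (pa0 - pak - pb0 + pbk) - (K+1) * (pab - nb^2 - pae + pbe))
    (hI : L*(K+2) * I1 = L*(K+1)*(pa0 - pak) + (K+1)*(pab - pae))
    (cs1 : pae - pbe ≤ nab * ne)
    (cs2 : pbe ≤ nb * ne) :
    ((K+1)*(K+2)/(2*L)) * na^2 - (K+2) * I1 ≤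
      (K*(K+1)/(2*L)) * nb^2 - (K+1)*(pb0 - pbk) + (1/(12*L)) * nb^2
        + (4*(K+1)^2/L) * ne^2 := by
  have hLne : L ≠ 0 := ne_of_gt hL
  set Q : ℝ := (K*(K+1)/2)*nb^2 - L*(K+1)*(pb0-pbk) + nb^2/12 + 4*(K+1)^2*ne^2
      - ((K+1)*(K+2)/2)*na^2 + L*(K+2)*I1 with hQdef
  have c0 : ((K+1)*(K+2)/2)*nab^2 = ((K+1)*(K+2)/2)*(na^2 - 2*pab + nb^2) := by rw [hns]
  have c1 : (K+1)*((K+2)*nab^2) ≤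
      (K+1)*(L * (pa0 - pak - pb0 + pbk) - (K+1) * (pab - nb^2 - pae + pbe)) :=
    mul_le_mul_of_nonneg_left hC (by linarith)
  have cs1' : ((K+1)^2+(K+1))*(pae - pbe) ≤ ((K+1)^2+(K+1))*(nab*ne) :=
    mul_le_mul_of_nonneg_left cs1 (by positivity)
  have cs2' : (K+1)*pbe ≤ (K+1)*(nb*ne) :=
    mul_le_mul_of_nonneg_left cs2 (by positivity)
  have am1 : (0:ℝ) ≤ ((K+1)^2+(K+1))*(nab - ne)^2 := by positivity
  have am2 : (0:ℝ) ≤ (nb - 6*(K+1)*ne)^2 := sq_nonneg _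
  have sl : (0:ℝ) ≤ ((K+1)^2 - (K+1))*ne^2 := by
    nlinarith [mul_nonneg hK (sq_nonneg ne), mul_nonneg (mul_nonneg hK hK) (sq_nonneg ne)]
  have hQ : 0 ≤ Q := by
    rw [hQdef]
    linarith [c0, c1, hI, cs1', cs2', am1, am2, sl]
  have hsplit : (K*(K+1)/(2*L)) * nb^2 - (K+1)*(pb0 - pbk) + (1/(12*L)) * nb^2
        + (4*(K+1)^2/L) * ne^2 - (((K+1)*(K+2)/(2*L)) * na^2 - (K+2) * I1)
      = (1/L) * Q := by
    rw [hQdef]; field_simp; ring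
  linarith [mul_nonneg (le_of_lt (one_div_pos.mpr hL)) hQ, hsplit]

set_option maxHeartbeats 1000000 in
set_option maxHeartbeats 1000000 in
theorem stmt_6 {Z : Type*} [NormedAddCommGroup Z] [InnerProductSpace ℝ Z]
    [FiniteDimensional ℝ Z]
    (L : ℝ) (hL : 0 < L) (G : Z → Z)
    (hG : ∀ z₁ z₂ : Z, ⟪G z₁ - G z₂, z₁ - z₂⟫ ≥ (1 / L) * ‖G z₁ - G z₂‖ ^ 2)
    (z ztil : ℕ → Z)
    (hrec : ∀ k : ℕ, z (k + 1) = (1 / ((k : ℝ) + 2)) • z 0 + (((k : ℝ) + 1) / ((k : ℝ) + 2)) • z k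
      - (((k : ℝ) + 1) / (L * ((k : ℝ) + 2))) • ztil k)
    (Lk : ℕ → ℝ)
    (hLk : ∀ k : ℕ, Lk k =
      ((k : ℝ) * ((k : ℝ) + 1) / (2 * L)) * ‖G (z k)‖ ^ 2 -
        ((k : ℝ) + 1) * ⟪G (z k), z 0 - z k⟫) :
    ∀ k : ℕ, Lk (k + 1) ≤ Lk k + (1 / (12 * L)) * ‖G (z k)‖ ^ 2 +
      (4 * ((k : ℝ) + 1) ^ 2 / L) * ‖G (z k) - ztil k‖ ^ 2 := by
  intro k
  have hLne : L ≠ 0 := ne_of_gt hL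
  have hk2 : ((k:ℝ) + 2) ≠ 0 := by positivity
  rw [hLk (k+1), hLk k]
  push_cast
  set a := G (z (k+1)) with ha
  set b := G (z k) with hb
  set e := b - ztil k with he
  have hte : ztil k = b - e := by rw [he]; abel
  -- cleared vector identities
  have hvd : (L*((k:ℝ)+2)) • (z (k+1) - z k) = L • (z 0 - z k) - ((k:ℝ)+1) • (b - e) := by
    rw [hrec k, hte]
    match_scalars <;> field_simp <;> ring
  have hv0 : (L*((k:ℝ)+2)) • (z 0 - z (k+1))
      = (L*((k:ℝ)+1)) • (z 0 - z k) + ((k:ℝ)+1) • (b - e) := by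
    rw [hrec k, hte]
    match_scalars <;> field_simp <;> ring
  have hco := hG (z (k+1)) (z k)
  rw [← ha, ← hb] at hco
  have h1 : ⟪a - b, (L*((k:ℝ)+2)) • (z (k+1) - z k)⟫
      = L*(⟪a, z 0⟫ - ⟪a, z k⟫ - ⟪b, z 0⟫ + ⟪b, z k⟫)
        - (((k:ℝ))+1)*(⟪a,b⟫ - ‖b‖^2 - ⟪a,e⟫ + ⟪b,e⟫) := by
    rw [hvd]
    simp only [inner_sub_left, inner_sub_right, real_inner_smul_right,
      real_inner_self_eq_norm_sq]
    ring
  have h2 : (L*((k:ℝ)+2)) * ((1/L) * ‖a-b‖^2) ≤ (L*((k:ℝ)+2)) * ⟪a-b, z (k+1) - z k⟫ :=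
    mul_le_mul_of_nonneg_left hco (by positivity)
  have h3 : ⟪a - b, (L*((k:ℝ)+2)) • (z (k+1) - z k)⟫
      = (L*((k:ℝ)+2)) * ⟪a - b, z (k+1) - z k⟫ := real_inner_smul_right _ _ _
  have h4 : (L*((k:ℝ)+2)) * ((1/L) * ‖a-b‖^2) = ((k:ℝ)+2) * ‖a-b‖^2 := by
    field_simp
  have hC : ((k:ℝ)+2)*‖a-b‖^2 ≤ L*(⟪a, z 0⟫ - ⟪a, z k⟫ - ⟪b, z 0⟫ + ⟪b, z k⟫)
        - (((k:ℝ))+1)*(⟪a,b⟫ - ‖b‖^2 - ⟪a,e⟫ + ⟪b,e⟫) := by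
    linarith [h1, h2, h3, h4]
  have hI : L*((k:ℝ)+2) * ⟪a, z 0 - z (k+1)⟫
      = L*((k:ℝ)+1)*(⟪a, z 0⟫ - ⟪a, z k⟫) + ((k:ℝ)+1)*(⟪a,b⟫ - ⟪a,e⟫) := by
    rw [← real_inner_smul_right, hv0]
    simp only [inner_add_right, inner_sub_right, real_inner_smul_right]
    try ring
  have hns : ‖a - b‖^2 = ‖a‖^2 - 2*⟪a,b⟫ + ‖b‖^2 := norm_sub_sq_real a b
  have cs1 : ⟪a,e⟫ - ⟪b,e⟫ ≤ ‖a-b‖ * ‖e‖ := by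
    have := real_inner_le_norm (a - b) e
    rwa [inner_sub_left] at this
  have cs2 : ⟪b,e⟫ ≤ ‖b‖ * ‖e‖ := real_inner_le_norm b e
  have hbd : ⟪b, z 0 - z k⟫ = ⟪b, z 0⟫ - ⟪b, z k⟫ := inner_sub_right b (z 0) (z k)
  have hK : (0:ℝ) ≤ (k:ℝ) := Nat.cast_nonneg k
  have key := key_ineq L (k:ℝ) ‖a‖ ‖b‖ ‖e‖ ‖a-b‖ ⟪a, z 0⟫ ⟪a, z k⟫ ⟪b, z 0⟫ ⟪b, z k⟫
    ⟪a,b⟫ ⟪a,e⟫ ⟪b,e⟫ ⟪a, z 0 - z (k+1)⟫ hL hK hns hC hI cs1 cs2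
  have hbd' : ((k:ℝ)+1) * ⟪b, z 0 - z k⟫ = ((k:ℝ)+1) * (⟪b, z 0⟫ - ⟪b, z k⟫) := by
    rw [hbd]
  rw [hbd]
  convert key using 2 <;> ring
end

section
/- Let G : Z → Z be (1/L)-co-coercive and let {z^k} be generated by the inexact Halpern iteration z^{k+1} = (1/(k+2)) z^0 + ((k+1)/(k+2)) z^k - ((k+1)/(L(k+2))) \tilde{z}^k, where ‖G(z^k) - \tilde{z}^k‖ ≤ γ_k for tolerances γ_k ≥ 0. If z* satisfies G(z*) = 0, then for all k ≥ 0, ‖G(z^k)‖² ≤ (7L‖z^0 - z*‖ + 10√(Σ_{i=0}^{k-1}(i+1)²γ_i²))² / ((k+1)(k+2)). -/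
open scoped RealInnerProductSpace

lemma scalar_step (κ L A B T C R Se γ P0 P1 Q0 Q1 : ℝ)
    (hκ : 0 ≤ κ) (hL : 0 < L) (hA : 0 ≤ A) (hT : 0 ≤ T) (hγ : 0 ≤ γ)
    (hcoco : (κ+2)*T^2 ≤ L*(P0 - P1 - Q0 + Q1) - (κ+1)*(C + R - B^2 - Se))
    (hT2 : T^2 = A^2 - 2*C + B^2)
    (hR : -(A*γ) ≤ R)
    (hRS : -(T*γ) ≤ R - Se) :
    (κ+1)*(κ+2)*A^2 + (2*L*(κ+1)*(P1 - P0) - 2*(κ+1)*(C + R)) ≤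
      κ*(κ+1)*B^2 + 2*L*(κ+1)*(Q1 - Q0) + 2*(κ+1)*γ*A + (κ+1)^2*γ^2 := by
  have hC : C = (A^2 + B^2 - T^2)/2 := by linarith
  rw [hC] at hcoco ⊢
  have h1 := mul_le_mul_of_nonneg_left hcoco
    (by nlinarith : (0:ℝ) ≤ 2*(κ+1)*(κ+2))
  have e1 : (0:ℝ) ≤ 2*((κ+2)*(κ+1))*(R + A*γ) := by
    have : (0:ℝ) ≤ R + A*γ := by linarith
    positivity
  have e2 : (0:ℝ) ≤ 2*((κ+2)*(κ+1)^2)*((R - Se) + T*γ) := by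
    have : (0:ℝ) ≤ (R - Se) + T*γ := by linarith
    positivity
  have e3 : (0:ℝ) ≤ (κ+1)*((κ+2)*T - (κ+1)*γ)^2 := by positivity
  have e4 : (0:ℝ) ≤ (κ+1)^2*γ^2 := by positivity
  have hk2 : (0:ℝ) < κ+2 := by linarith
  rw [← mul_le_mul_iff_right₀ hk2]
  nlinarith [h1, e1, e2, e3, e4]

lemma step_ineq {Z : Type*} [NormedAddCommGroup Z] [InnerProductSpace ℝ Z]
    (L : ℝ) (hL : 0 < L) (G : Z → Z)
    (hG : ∀ z₁ z₂ : Z, ⟪G z₁ - G z₂, z₁ - z₂⟫ ≥ (1 / L) * ‖G z₁ - G z₂‖ ^ 2)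
    (k : ℕ) (z0 zk zk1 til : Z) (γk : ℝ) (hγk : 0 ≤ γk)
    (he : ‖G zk - til‖ ≤ γk)
    (hrec : zk1 = (1 / ((k : ℝ) + 2)) • z0 + (((k : ℝ) + 1) / ((k : ℝ) + 2)) • zk
      - (((k : ℝ) + 1) / (L * ((k : ℝ) + 2))) • til) :
    ((k:ℝ)+1)*((k:ℝ)+2)*‖G zk1‖^2 + 2*L*((k:ℝ)+2)*⟪G zk1, zk1 - z0⟫ ≤
      (k:ℝ)*((k:ℝ)+1)*‖G zk‖^2 + 2*L*((k:ℝ)+1)*⟪G zk, zk - z0⟫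
      + 2*((k:ℝ)+1)*γk*‖G zk1‖ + ((k:ℝ)+1)^2*γk^2 := by
  have hk2 : (0:ℝ) < (k:ℝ)+2 := by positivity
  have hLne : L ≠ 0 := ne_of_gt hL
  have hkne : ((k:ℝ)+2) ≠ 0 := ne_of_gt hk2
  obtain ⟨e, he', htil⟩ : ∃ e : Z, ‖e‖ ≤ γk ∧ til = G zk + e :=
    ⟨til - G zk, by rwa [norm_sub_rev], by abel⟩
  have h1 : zk1 - zk = (1/((k:ℝ)+2)) • (z0 - zk)
      - (((k:ℝ)+1)/(L*((k:ℝ)+2))) • (G zk + e) := by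
    rw [hrec, htil]
    match_scalars <;> field_simp <;> ring
  have h2 : zk1 - z0 = (((k:ℝ)+1)/((k:ℝ)+2)) • (zk - z0)
      - (((k:ℝ)+1)/(L*((k:ℝ)+2))) • (G zk + e) := by
    rw [hrec, htil]
    match_scalars <;> field_simp <;> ring
  have e1 : ⟪G zk1 - G zk, zk1 - zk⟫ =
      (1/((k:ℝ)+2)) * (⟪G zk1, z0⟫ - ⟪G zk1, zk⟫ - ⟪G zk, z0⟫ + ⟪G zk, zk⟫)
      - (((k:ℝ)+1)/(L*((k:ℝ)+2))) * (⟪G zk1, G zk⟫ + ⟪G zk1, e⟫ - ‖G zk‖^2 - ⟪G zk, e⟫) := by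
    rw [h1]
    simp only [inner_sub_left, inner_sub_right, inner_add_right, real_inner_smul_right,
      real_inner_self_eq_norm_sq]
    ring
  have e2 : 2*L*((k:ℝ)+2)*⟪G zk1, zk1 - z0⟫ =
      2*L*((k:ℝ)+1)*(⟪G zk1, zk⟫ - ⟪G zk1, z0⟫) - 2*((k:ℝ)+1)*(⟪G zk1, G zk⟫ + ⟪G zk1, e⟫) := by
    rw [h2]
    simp only [inner_sub_right, inner_add_right, real_inner_smul_right]
    field_simp
  have e3 : 2*L*((k:ℝ)+1)*⟪G zk, zk - z0⟫ = 2*L*((k:ℝ)+1)*(⟪G zk, zk⟫ - ⟪G zk, z0⟫) := by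
    rw [inner_sub_right]
  rw [e2, e3]
  have hco := hG zk1 zk
  rw [e1, ge_iff_le] at hco
  have hmul := mul_le_mul_of_nonneg_left hco (le_of_lt (mul_pos hL hk2))
  have eqA : L*((k:ℝ)+2) * (1 / L * ‖G zk1 - G zk‖ ^ 2) = ((k:ℝ)+2)*‖G zk1 - G zk‖^2 := by
    field_simp
  have eqB : L*((k:ℝ)+2) *
      ((1/((k:ℝ)+2)) * (⟪G zk1, z0⟫ - ⟪G zk1, zk⟫ - ⟪G zk, z0⟫ + ⟪G zk, zk⟫)
      - (((k:ℝ)+1)/(L*((k:ℝ)+2))) * (⟪G zk1, G zk⟫ + ⟪G zk1, e⟫ - ‖G zk‖^2 - ⟪G zk, e⟫)) =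
      L*(⟪G zk1, z0⟫ - ⟪G zk1, zk⟫ - ⟪G zk, z0⟫ + ⟪G zk, zk⟫)
      - ((k:ℝ)+1)*(⟪G zk1, G zk⟫ + ⟪G zk1, e⟫ - ‖G zk‖^2 - ⟪G zk, e⟫) := by
    field_simp
  rw [eqA, eqB] at hmul
  have hT2 : ‖G zk1 - G zk‖^2 = ‖G zk1‖^2 - 2*⟪G zk1, G zk⟫ + ‖G zk‖^2 :=
    norm_sub_sq_real _ _
  have hR : -(‖G zk1‖*γk) ≤ ⟪G zk1, e⟫ := by
    have h := abs_real_inner_le_norm (G zk1) e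
    have h2' : ‖G zk1‖ * ‖e‖ ≤ ‖G zk1‖ * γk :=
      mul_le_mul_of_nonneg_left he' (norm_nonneg _)
    have h3 := neg_abs_le ⟪G zk1, e⟫
    linarith
  have hRS : -(‖G zk1 - G zk‖*γk) ≤ ⟪G zk1, e⟫ - ⟪G zk, e⟫ := by
    have h := abs_real_inner_le_norm (G zk1 - G zk) e
    have h2' : ⟪G zk1 - G zk, e⟫ = ⟪G zk1, e⟫ - ⟪G zk, e⟫ := inner_sub_left _ _ _
    have h4 : ‖G zk1 - G zk‖ * ‖e‖ ≤ ‖G zk1 - G zk‖ * γk :=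
      mul_le_mul_of_nonneg_left he' (norm_nonneg _)
    have h3 := neg_abs_le ⟪G zk1 - G zk, e⟫
    linarith
  have key := scalar_step (k:ℝ) L ‖G zk1‖ ‖G zk‖ ‖G zk1 - G zk‖ ⟪G zk1, G zk⟫
    ⟪G zk1, e⟫ ⟪G zk, e⟫ γk ⟪G zk1, z0⟫ ⟪G zk1, zk⟫ ⟪G zk, z0⟫ ⟪G zk, zk⟫
    (Nat.cast_nonneg k) hL (norm_nonneg _) (norm_nonneg _) hγk hmul hT2 hR hRS
  linarith [key]

lemma sum_inv_sq_le (k : ℕ) : ∑ i ∈ Finset.range k, (1/((i:ℝ)+1))^2 ≤ 2 - 2/((k:ℝ)+1) := by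
  induction k with
  | zero => simp
  | succ m ih =>
    rw [Finset.sum_range_succ]
    have h1 : (0:ℝ) < (m:ℝ)+1 := by positivity
    have h2 : (0:ℝ) < (m:ℝ)+2 := by positivity
    have key : (1/((m:ℝ)+1))^2 ≤ 2/((m:ℝ)+1) - 2/((m:ℝ)+2) := by
      rw [div_pow, one_pow, div_sub_div _ _ (ne_of_gt h1) (ne_of_gt h2),
        div_le_div_iff₀ (by positivity) (by positivity)]
      ring_nf
      nlinarith [sq_nonneg ((m:ℝ)+1)]
    have hc : ((m+1:ℕ):ℝ) = (m:ℝ)+1 := by push_cast; ring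
    rw [hc]
    have hc2 : ((m:ℝ)+1+1) = (m:ℝ)+2 := by ring
    rw [hc2]
    linarith
set_option maxHeartbeats 1600000

theorem stmt_7 {Z : Type*} [NormedAddCommGroup Z] [InnerProductSpace ℝ Z]
    [FiniteDimensional ℝ Z]
    (L : ℝ) (hL : 0 < L) (G : Z → Z)
    (hG : ∀ z₁ z₂ : Z, ⟪G z₁ - G z₂, z₁ - z₂⟫ ≥ (1 / L) * ‖G z₁ - G z₂‖ ^ 2)
    (z ztil : ℕ → Z) (γ : ℕ → ℝ) (hγ : ∀ k, 0 ≤ γ k)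
    (hrec : ∀ k : ℕ, z (k + 1) = (1 / ((k : ℝ) + 2)) • z 0 + (((k : ℝ) + 1) / ((k : ℝ) + 2)) • z k
      - (((k : ℝ) + 1) / (L * ((k : ℝ) + 2))) • ztil k)
    (hin : ∀ k : ℕ, ‖G (z k) - ztil k‖ ≤ γ k)
    (zs : Z) (hzs : G zs = 0) :
    ∀ k : ℕ, ‖G (z k)‖ ^ 2 ≤
      (7 * L * ‖z 0 - zs‖ +
          10 * Real.sqrt (∑ i ∈ Finset.range k, ((i : ℝ) + 1) ^ 2 * γ i ^ 2)) ^ 2 /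
        (((k : ℝ) + 1) * ((k : ℝ) + 2)) := by
  have hD0 : (0:ℝ) ≤ ‖z 0 - zs‖ := norm_nonneg _
  have hd0 : (0:ℝ) ≤ L * ‖z 0 - zs‖ := by positivity
  -- abbreviations (as plain functions)
  let S : ℕ → ℝ := fun n => ∑ i ∈ Finset.range n, ((i:ℝ)+1)^2 * γ i^2
  let Γ : ℕ → ℝ := fun n => ∑ i ∈ Finset.range n, γ i
  let Q : ℕ → ℝ := fun n => 2*(2*(L*‖z 0 - zs‖) + 2*Γ n) + Real.sqrt (S n)
  have hS0 : ∀ n, 0 ≤ S n := fun n => Finset.sum_nonneg (fun i _ => by positivity)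
  have hΓ0 : ∀ n, 0 ≤ Γ n := fun n => Finset.sum_nonneg (fun i _ => hγ i)
  have hSmono : ∀ i j : ℕ, i ≤ j → S i ≤ S j := fun i j h =>
    Finset.sum_le_sum_of_subset_of_nonneg (Finset.range_subset_range.mpr h)
      (fun m _ _ => by positivity)
  have hΓmono : ∀ i j : ℕ, i ≤ j → Γ i ≤ Γ j := fun i j h =>
    Finset.sum_le_sum_of_subset_of_nonneg (Finset.range_subset_range.mpr h)
      (fun m _ _ => hγ m)
  have hQmono : ∀ i j : ℕ, i ≤ j → Q i ≤ Q j := by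
    intro i j h
    have h1 := hΓmono i j h
    have h2 := Real.sqrt_le_sqrt (hSmono i j h)
    show 2*(2*(L*‖z 0 - zs‖) + 2*Γ i) + Real.sqrt (S i) ≤
      2*(2*(L*‖z 0 - zs‖) + 2*Γ j) + Real.sqrt (S j)
    linarith
  have hQ0 : ∀ n, 0 ≤ Q n := by
    intro n
    have := Real.sqrt_nonneg (S n)
    have := hΓ0 n
    show 0 ≤ 2*(2*(L*‖z 0 - zs‖) + 2*Γ n) + Real.sqrt (S n)
    linarith
  -- master inequality
  have master : ∀ n : ℕ, ((n:ℝ)+1)*((n:ℝ)+2)*‖G (z n)‖^2 ≤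
      2*(L*‖z 0 - zs‖)*(((n:ℝ)+1)*‖G (z n)‖) +
      ∑ i ∈ Finset.range n, (2*((i:ℝ)+1)*γ i*‖G (z (i+1))‖ + ((i:ℝ)+1)^2*γ i^2) := by
    have hWsum : ∀ n : ℕ,
        (n:ℝ)*((n:ℝ)+1)*‖G (z n)‖^2 + 2*L*((n:ℝ)+1)*⟪G (z n), z n - z 0⟫ ≤
        ∑ i ∈ Finset.range n, (2*((i:ℝ)+1)*γ i*‖G (z (i+1))‖ + ((i:ℝ)+1)^2*(γ i)^2) := by
      intro n
      induction n with
      | zero => simp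
      | succ m ih =>
        have hs := step_ineq L hL G hG m (z 0) (z m) (z (m+1)) (ztil m) (γ m) (hγ m)
          (hin m) (hrec m)
        rw [Finset.sum_range_succ]
        push_cast
        linarith [hs, ih]
    intro n
    have hco := hG (z n) zs
    rw [hzs, sub_zero] at hco
    rw [ge_iff_le] at hco
    have hmul := mul_le_mul_of_nonneg_left hco (by positivity : (0:ℝ) ≤ 2*L*((n:ℝ)+1))
    have eqC : 2*L*((n:ℝ)+1) * (1 / L * ‖G (z n)‖ ^ 2) = 2*((n:ℝ)+1)*‖G (z n)‖^2 := by
      field_simp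
    rw [eqC] at hmul
    have hsplit : 2*L*((n:ℝ)+1)*⟪G (z n), z n - z 0⟫ =
        2*L*((n:ℝ)+1)*⟪G (z n), z n - zs⟫ + 2*L*((n:ℝ)+1)*⟪G (z n), zs - z 0⟫ := by
      rw [show ⟪G (z n), z n - z 0⟫ = ⟪G (z n), z n - zs⟫ + ⟪G (z n), zs - z 0⟫ by
        rw [← inner_add_right]; congr 1; abel]
      ring
    have hcs : -(‖G (z n)‖ * ‖z 0 - zs‖) ≤ ⟪G (z n), zs - z 0⟫ := by
      have h := abs_real_inner_le_norm (G (z n)) (zs - z 0)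
      have h2 : ‖zs - z 0‖ = ‖z 0 - zs‖ := norm_sub_rev _ _
      have h3 := neg_abs_le ⟪G (z n), zs - z 0⟫
      rw [h2] at h
      linarith
    have hcs2 := mul_le_mul_of_nonneg_left hcs (by positivity : (0:ℝ) ≤ 2*L*((n:ℝ)+1))
    have hW := hWsum n
    nlinarith [hW, hmul, hcs2, hsplit]
  -- key bound by strong induction
  have key : ∀ n : ℕ, ((n:ℝ)+1)*‖G (z n)‖ ≤ Q n := by
    intro n
    induction n using Nat.strong_induction_on with
    | _ n ih =>
    by_cases hc : ((n:ℝ)+1)*‖G (z n)‖ ≤ Q n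
    · exact hc
    push_neg at hc
    exfalso
    have hpn : ∀ i ∈ Finset.range n, ((i:ℝ)+1)*‖G (z (i+1))‖ ≤ ((n:ℝ)+1)*‖G (z n)‖ := by
      intro i hi
      have hi' : i + 1 ≤ n := Nat.succ_le_of_lt (Finset.mem_range.mp hi)
      rcases lt_or_eq_of_le hi' with h | h
      · have hQle : Q (i+1) ≤ Q n := hQmono _ _ (le_of_lt h)
        have hih := ih (i+1) h
        push_cast at hih
        nlinarith [norm_nonneg (G (z (i+1))), hQ0 n]
      · rw [h]
        have hcast : ((i:ℝ)+1) ≤ ((n:ℝ)+1) := by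
          have : (i:ℝ) ≤ (n:ℝ) := by exact_mod_cast Nat.le_of_succ_le hi'
          linarith
        exact mul_le_mul_of_nonneg_right hcast (norm_nonneg _)
    have hsum : ∑ i ∈ Finset.range n, (2*((i:ℝ)+1)*γ i*‖G (z (i+1))‖ + ((i:ℝ)+1)^2*γ i^2) ≤
        2*Γ n*(((n:ℝ)+1)*‖G (z n)‖) + S n := by
      have h1 : ∀ i ∈ Finset.range n,
          2*((i:ℝ)+1)*γ i*‖G (z (i+1))‖ + ((i:ℝ)+1)^2*γ i^2 ≤
          γ i * (2*(((n:ℝ)+1)*‖G (z n)‖)) + ((i:ℝ)+1)^2*γ i^2 := by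
        intro i hi
        have := mul_le_mul_of_nonneg_left (hpn i hi) (mul_nonneg (by norm_num : (0:ℝ) ≤ 2) (hγ i))
        nlinarith [this]
      calc ∑ i ∈ Finset.range n, (2*((i:ℝ)+1)*γ i*‖G (z (i+1))‖ + ((i:ℝ)+1)^2*γ i^2)
          ≤ ∑ i ∈ Finset.range n, (γ i * (2*(((n:ℝ)+1)*‖G (z n)‖)) + ((i:ℝ)+1)^2*γ i^2) :=
            Finset.sum_le_sum h1
        _ = 2*Γ n*(((n:ℝ)+1)*‖G (z n)‖) + S n := by
            rw [Finset.sum_add_distrib, ← Finset.sum_mul]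
            ring
    have hm := master n
    have hs2 : Real.sqrt (S n)^2 = S n := Real.sq_sqrt (hS0 n)
    have hu0 : (0:ℝ) ≤ ‖G (z n)‖ := norm_nonneg _
    have hp2 : (((n:ℝ)+1)*‖G (z n)‖)^2 ≤ ((n:ℝ)+1)*((n:ℝ)+2)*‖G (z n)‖^2 := by
      nlinarith [sq_nonneg ‖G (z n)‖, Nat.cast_nonneg (α := ℝ) n]
    have hQn : Q n = 2*(2*(L*‖z 0 - zs‖) + 2*Γ n) + Real.sqrt (S n) := rfl
    have hppos : (0:ℝ) < ((n:ℝ)+1)*‖G (z n)‖ := lt_of_le_of_lt (hQ0 n) hc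
    nlinarith [hm, hsum, hs2, hp2, hc, hppos, hΓ0 n, Real.sqrt_nonneg (S n), hd0,
      mul_pos (sub_pos.mpr hc) hppos,
      mul_le_mul_of_nonneg_left (le_of_lt hc) (Real.sqrt_nonneg (S n)),
      mul_nonneg (hΓ0 n) (le_of_lt hppos), mul_nonneg hd0 (le_of_lt hppos)]
  -- final assembly
  intro k
  rw [le_div_iff₀ (by positivity : (0:ℝ) < ((k:ℝ)+1)*((k:ℝ)+2))]
  -- Cauchy-Schwarz : Γ k ^ 2 ≤ 2 * S k
  have hCS : (Γ k)^2 ≤ 2 * S k := by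
    have h1 : Γ k = ∑ i ∈ Finset.range k, (((i:ℝ)+1)*γ i) * (1/((i:ℝ)+1)) := by
      apply Finset.sum_congr rfl
      intro i _
      have hne : ((i:ℝ)+1) ≠ 0 := by positivity
      field_simp
    have h2 := Finset.sum_mul_sq_le_sq_mul_sq (Finset.range k)
      (fun i => ((i:ℝ)+1)*γ i) (fun i => 1/((i:ℝ)+1))
    have h3 : ∑ i ∈ Finset.range k, (((i:ℝ)+1)*γ i)^2 = S k := by
      apply Finset.sum_congr rfl
      intro i _
      ring
    have h4 : ∑ i ∈ Finset.range k, (1/((i:ℝ)+1))^2 ≤ 2 := by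
      have := sum_inv_sq_le k
      have h5 : (0:ℝ) ≤ 2/((k:ℝ)+1) := by positivity
      linarith
    rw [← h1, h3] at h2
    have h6 := mul_le_mul_of_nonneg_left h4 (hS0 k)
    linarith
  -- combine
  have hs2 : Real.sqrt (S k)^2 = S k := Real.sq_sqrt (hS0 k)
  have hsum2 : ∑ i ∈ Finset.range k, (2*((i:ℝ)+1)*γ i*‖G (z (i+1))‖ + ((i:ℝ)+1)^2*γ i^2) ≤
      Γ k * (2 * Q k) + S k := by
    have h1 : ∀ i ∈ Finset.range k,
        2*((i:ℝ)+1)*γ i*‖G (z (i+1))‖ + ((i:ℝ)+1)^2*γ i^2 ≤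
        γ i * (2 * Q k) + ((i:ℝ)+1)^2*γ i^2 := by
      intro i hi
      have hik : i + 1 ≤ k := Nat.succ_le_of_lt (Finset.mem_range.mp hi)
      have hkey := key (i+1)
      push_cast at hkey
      have hQle : Q (i+1) ≤ Q k := hQmono _ _ hik
      have hu0 : (0:ℝ) ≤ ‖G (z (i+1))‖ := norm_nonneg _
      nlinarith [hγ i, mul_nonneg (hγ i) hu0]
    calc ∑ i ∈ Finset.range k, (2*((i:ℝ)+1)*γ i*‖G (z (i+1))‖ + ((i:ℝ)+1)^2*γ i^2)
        ≤ ∑ i ∈ Finset.range k, (γ i * (2 * Q k) + ((i:ℝ)+1)^2*γ i^2) :=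
          Finset.sum_le_sum h1
      _ = Γ k * (2 * Q k) + S k := by
          rw [Finset.sum_add_distrib, ← Finset.sum_mul]
  have hm := master k
  have hkeyk := key k
  have hQk : Q k = 2*(2*(L*‖z 0 - zs‖) + 2*Γ k) + Real.sqrt (S k) := rfl
  have hSk : S k = ∑ i ∈ Finset.range k, ((i:ℝ)+1)^2 * γ i^2 := rfl
  rw [← hSk]
  have hu0 : (0:ℝ) ≤ ‖G (z k)‖ := norm_nonneg _
  have hQ0k := hQ0 k
  have hmul2 := mul_le_mul_of_nonneg_left hkeyk (by positivity : (0:ℝ) ≤ 2*(L*‖z 0 - zs‖))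
  nlinarith [hm, hsum2, hmul2, hCS, hs2, hd0, hΓ0 k, Real.sqrt_nonneg (S k), hQ0k,
    sq_nonneg (L*‖z 0 - zs‖ - Γ k), sq_nonneg (Γ k - Real.sqrt (S k)),
    mul_nonneg hd0 (Real.sqrt_nonneg (S k)), mul_nonneg (hΓ0 k) (Real.sqrt_nonneg (S k)),
    mul_nonneg hd0 (hΓ0 k)]
end

section
/- Let {a_k}, {b_k} be sequences of nonnegative reals with b_k nondecreasing, and D ≥ 0. Suppose a_0 ≤ D and for all k ≥ 1, a_k² ≤ (1/(3k(k+1))) Σ_{i=0}^{k-1} a_i² + (48/((k+1)(k+2))) b_k + (24 D²/((k+1)(k+2))). Then for all k ≥ 1, a_k² ≤ (7D + 10√(b_k))² / ((k+1)(k+2)). -/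
private lemma tele_sum (m : ℕ) :
    ∑ i ∈ Finset.range m, (1:ℝ)/(((i:ℝ)+1)*((i:ℝ)+2)) = 1 - 1/((m:ℝ)+1) := by
  induction m with
  | zero => simp
  | succ n ih =>
    rw [Finset.sum_range_succ, ih]
    have h1 : ((n:ℝ)+1) ≠ 0 := by positivity
    have h2 : ((n:ℝ)+2) ≠ 0 := by positivity
    push_cast
    field_simp
    ring

private lemma key_step (A S cv bv D K : ℝ) (hK : 0 ≤ K) (hbv : 0 ≤ bv)
    (hS : S ≤ cv * (K+1)/(K+2)) (hcv : 96*bv + 48*D^2 ≤ cv) (hcv0 : 0 ≤ cv)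
    (hrec : A ≤ 1/(3*(K+1)*(K+2)) * S + 48/((K+2)*(K+3))*bv + 24*D^2/((K+2)*(K+3))) :
    A ≤ cv/((K+2)*(K+3)) := by
  have h1 : (0:ℝ) < K+1 := by linarith
  have h2 : (0:ℝ) < K+2 := by linarith
  have h3 : (0:ℝ) < K+3 := by linarith
  rw [le_div_iff₀ (by positivity)]
  set t : ℝ := cv/(3*(K+2)^2) with ht
  set s : ℝ := (48*bv + 24*D^2)/((K+2)*(K+3)) with hs
  have et : t * (3*(K+2)^2) = cv := by
    rw [ht]; field_simp
  have es : s * ((K+2)*(K+3)) = 48*bv + 24*D^2 := by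
    rw [hs]; field_simp
  have ht0 : 0 ≤ t := by positivity
  have hs0 : 0 ≤ s := by positivity
  have e1 : 1/(3*(K+1)*(K+2)) * S ≤ t := by
    have hpos : (0:ℝ) ≤ 1/(3*(K+1)*(K+2)) := by positivity
    have h := mul_le_mul_of_nonneg_left hS hpos
    calc 1/(3*(K+1)*(K+2)) * S ≤ 1/(3*(K+1)*(K+2)) * (cv*(K+1)/(K+2)) := h
      _ = t := by rw [ht]; field_simp; try ring
  have hA : A ≤ t + s := by
    have e2 : 48/((K+2)*(K+3))*bv + 24*D^2/((K+2)*(K+3)) = s := by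
      rw [hs]; field_simp; try ring
    linarith [hrec, e1]
  have hmul : A * ((K+2)*(K+3)) ≤ (t+s) * ((K+2)*(K+3)) :=
    mul_le_mul_of_nonneg_right hA (by positivity)
  have hK2 : 0 ≤ t * K * (K+2) := by positivity
  nlinarith [hmul, et, es, hcv, hK2]

theorem stmt_9 (a b : ℕ → ℝ) (D : ℝ) (hD : 0 ≤ D)
    (ha : ∀ k, 0 ≤ a k) (hb : ∀ k, 0 ≤ b k) (hbmono : Monotone b)
    (h0 : a 0 ≤ D)
    (hrec : ∀ k : ℕ, 1 ≤ k →
      a k ^ 2 ≤ (1 / (3 * (k : ℝ) * ((k : ℝ) + 1))) * ∑ i ∈ Finset.range k, a i ^ 2 +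
        (48 / (((k : ℝ) + 1) * ((k : ℝ) + 2))) * b k +
        24 * D ^ 2 / (((k : ℝ) + 1) * ((k : ℝ) + 2))) :
    ∀ k : ℕ, 1 ≤ k →
      a k ^ 2 ≤ (7 * D + 10 * Real.sqrt (b k)) ^ 2 / (((k : ℝ) + 1) * ((k : ℝ) + 2)) := by
  set c : ℕ → ℝ := fun k => (7 * D + 10 * Real.sqrt (b k))^2 with hcdef
  have hsq : ∀ k, Real.sqrt (b k) ^ 2 = b k := fun k => Real.sq_sqrt (hb k)
  have hsnn : ∀ k, 0 ≤ Real.sqrt (b k) := fun k => Real.sqrt_nonneg _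
  have hc0 : ∀ k, 0 ≤ c k := fun k => sq_nonneg _
  have hcmono : ∀ i j, i ≤ j → c i ≤ c j := by
    intro i j hij
    have h1 : Real.sqrt (b i) ≤ Real.sqrt (b j) := Real.sqrt_le_sqrt (hbmono hij)
    have h2 : 0 ≤ 7*D + 10*Real.sqrt (b i) := by positivity
    simp only [hcdef]
    nlinarith [hsnn i, hsnn j]
  have hcb : ∀ k, 96 * b k + 48 * D^2 ≤ c k := by
    intro k
    simp only [hcdef]
    nlinarith [hsq k, hsnn k, mul_nonneg hD (hsnn k)]
  have main : ∀ k : ℕ, a k ^ 2 ≤ c k / (((k:ℝ)+1) * ((k:ℝ)+2)) := by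
    intro k
    induction k using Nat.strong_induction_on with
    | _ k ih =>
      match k with
      | 0 =>
        have h1 : a 0 ^ 2 ≤ D ^ 2 := by nlinarith [ha 0]
        simp only [Nat.cast_zero]
        rw [le_div_iff₀ (by norm_num : (0:ℝ) < (0+1)*(0+2))]
        have h2 := hcb 0
        have h3 := hb 0
        nlinarith
      | (n+1) =>
        have hk1 : 1 ≤ n+1 := Nat.le_add_left 1 n
        have hrecn := hrec (n+1) hk1
        push_cast at hrecn
        have hK : (0:ℝ) ≤ (n:ℝ) := Nat.cast_nonneg n
        have hterm : ∀ i ∈ Finset.range (n+1),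
            a i ^ 2 ≤ c (n+1) * ((1:ℝ)/(((i:ℝ)+1)*((i:ℝ)+2))) := by
          intro i hi
          have hi' : i < n+1 := Finset.mem_range.mp hi
          have hd : (0:ℝ) < ((i:ℝ)+1)*((i:ℝ)+2) := by positivity
          have h1 := ih i hi'
          have h2 : c i / (((i:ℝ)+1)*((i:ℝ)+2)) ≤ c (n+1) / (((i:ℝ)+1)*((i:ℝ)+2)) :=
            (div_le_div_iff_of_pos_right hd).mpr (hcmono i (n+1) (le_of_lt hi'))
          calc a i ^ 2 ≤ c (n+1) / (((i:ℝ)+1)*((i:ℝ)+2)) := le_trans h1 h2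
            _ = c (n+1) * ((1:ℝ)/(((i:ℝ)+1)*((i:ℝ)+2))) := by rw [mul_one_div]
        have hsum : ∑ i ∈ Finset.range (n+1), a i ^ 2 ≤ c (n+1) * (((n:ℝ)+1)/((n:ℝ)+2)) := by
          calc ∑ i ∈ Finset.range (n+1), a i ^ 2
              ≤ ∑ i ∈ Finset.range (n+1), c (n+1) * ((1:ℝ)/(((i:ℝ)+1)*((i:ℝ)+2))) :=
                Finset.sum_le_sum hterm
            _ = c (n+1) * ∑ i ∈ Finset.range (n+1), (1:ℝ)/(((i:ℝ)+1)*((i:ℝ)+2)) := by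
                rw [Finset.mul_sum]
            _ = c (n+1) * (((n:ℝ)+1)/((n:ℝ)+2)) := by
                rw [tele_sum]
                have h2 : ((n:ℝ)+2) ≠ 0 := by positivity
                have h3 : (1:ℝ) - 1/(((n+1:ℕ):ℝ)+1) = ((n:ℝ)+1)/((n:ℝ)+2) := by
                  push_cast
                  rw [sub_eq_iff_eq_add, show ((n:ℝ)+1+1) = (n:ℝ)+2 from by ring,
                    ← add_div, eq_comm, div_eq_one_iff_eq h2]
                  ring
                rw [h3]
        have := key_step (a (n+1) ^ 2) (∑ i ∈ Finset.range (n+1), a i ^ 2)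
          (c (n+1)) (b (n+1)) D (n:ℝ) hK (hb (n+1))
          (by rw [mul_div_assoc]; exact hsum)
          (hcb (n+1)) (hc0 (n+1))
          (by convert hrecn using 2 <;> push_cast <;> ring)
        have heq : ((n:ℝ)+1+1) * ((n:ℝ)+1+2) = ((n:ℝ)+2)*((n:ℝ)+3) := by ring
        push_cast
        rw [heq]
        exact this
  intro k hk
  have := main k
  simpa [hcdef] using this
end

section
/- Let F : Z → Z be (1/L)-co-coercive (L > 0) and E : Z → 2^Z be maximal monotone with resolvent J_{αE} = (I + αE)^{-1}. For 0 < α < 4/L, the mapping G(z) := (1/α)(z - J_{αE}(z - α F(z))) is (α(4 - αL)/4)-co-coercive, i.e., ⟨G(z₁) - G(z₂), z₁ - z₂⟩ ≥ (α(4-αL)/4)‖G(z₁) - G(z₂)‖² for all z₁, z₂ ∈ Z. -/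
open scoped RealInnerProductSpace

/-- Co-coerciveness of `G(z) = (1/α)(z - J(z - αF(z)))`, where `J = J_{αE}` is the
resolvent of a maximal monotone operator, hence firmly nonexpansive. -/
theorem stmt_12 {Z : Type*} [NormedAddCommGroup Z] [InnerProductSpace ℝ Z]
    [CompleteSpace Z]
    (L : ℝ) (hL : 0 < L) (F : Z → Z)
    (hF : ∀ z₁ z₂ : Z, ⟪F z₁ - F z₂, z₁ - z₂⟫ ≥ (1 / L) * ‖F z₁ - F z₂‖ ^ 2)
    (J : Z → Z)
    (hJ : ∀ x y : Z, ⟪J x - J y, x - y⟫ ≥ ‖J x - J y‖ ^ 2)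
    (α : ℝ) (hα : 0 < α) (hα' : α < 4 / L)
    (G : Z → Z) (hGdef : ∀ z, G z = (1 / α) • (z - J (z - α • F z))) :
    ∀ z₁ z₂ : Z, ⟪G z₁ - G z₂, z₁ - z₂⟫ ≥ (α * (4 - α * L) / 4) * ‖G z₁ - G z₂‖ ^ 2 := by
  intro z₁ z₂
  have hα0 : α ≠ 0 := ne_of_gt hα
  set d := z₁ - z₂ with hd
  set f := F z₁ - F z₂ with hf
  set g := G z₁ - G z₂ with hg
  have hJg : J (z₁ - α • F z₁) - J (z₂ - α • F z₂) = d - α • g := by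
    have hsm : α • g = (z₁ - J (z₁ - α • F z₁)) - (z₂ - J (z₂ - α • F z₂)) := by
      rw [hg, hGdef, hGdef, ← smul_sub, smul_smul, mul_one_div_cancel hα0, one_smul]
    rw [hsm, hd]
    abel
  have hx : (z₁ - α • F z₁) - (z₂ - α • F z₂) = d - α • f := by
    rw [hd, hf, smul_sub]; abel
  have h1 := hJ (z₁ - α • F z₁) (z₂ - α • F z₂)
  rw [hJg, hx] at h1
  have h2 := hF z₁ z₂
  rw [← hf, ← hd] at h2
  -- expand inner products
  have e1 : ⟪d - α • g, d - α • f⟫ =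
      ⟪d, d⟫ - α * ⟪f, d⟫ - α * ⟪g, d⟫ + α ^ 2 * ⟪g, f⟫ := by
    simp only [inner_sub_left, inner_sub_right, real_inner_smul_left,
      real_inner_smul_right, real_inner_comm d f, real_inner_comm d g,
      real_inner_comm f g]
    ring
  have e2 : ‖d - α • g‖ ^ 2 = ⟪d, d⟫ - 2 * α * ⟪g, d⟫ + α ^ 2 * ‖g‖ ^ 2 := by
    rw [← real_inner_self_eq_norm_sq, ← real_inner_self_eq_norm_sq]
    simp only [inner_sub_left, inner_sub_right, real_inner_smul_left,
      real_inner_smul_right, real_inner_comm d g]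
    ring
  have e3 : (0:ℝ) ≤ ‖f - ((α * L / 2)) • g‖ ^ 2 := sq_nonneg _
  have e4 : ‖f - ((α * L / 2)) • g‖ ^ 2 =
      ‖f‖ ^ 2 - α * L * ⟪g, f⟫ + (α * L / 2) ^ 2 * ‖g‖ ^ 2 := by
    rw [← real_inner_self_eq_norm_sq, ← real_inner_self_eq_norm_sq,
      ← real_inner_self_eq_norm_sq]
    simp only [inner_sub_left, inner_sub_right, real_inner_smul_left,
      real_inner_smul_right, real_inner_comm f g]
    ring
  rw [e1, e2] at h1
  rw [e4] at e3
  have hgd : ⟪G z₁ - G z₂, z₁ - z₂⟫ = ⟪g, d⟫ := by rw [← hg, ← hd]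
  rw [hgd]
  -- from h1: α*⟪g,d⟫ ≥ α*⟪f,d⟫ - α^2*⟪g,f⟫ + α^2‖g‖^2
  have key : α * ⟪g, d⟫ ≥ α * ⟪f, d⟫ - α ^ 2 * ⟪g, f⟫ + α ^ 2 * ‖g‖ ^ 2 := by
    nlinarith [h1]
  have hB : ⟪f, d⟫ ≥ (1 / L) * ‖f‖ ^ 2 := h2
  -- from e3: α * ⟪g,f⟫ ≤ (1/L)‖f‖^2 + α^2*L/4*‖g‖^2
  have hC : α * ⟪g, f⟫ ≤ (1 / L) * ‖f‖ ^ 2 + α ^ 2 * L / 4 * ‖g‖ ^ 2 := by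
    rw [← sub_nonneg]
    have h5 : (0:ℝ) ≤ (1 / L) * (‖f‖ ^ 2 - α * L * ⟪g, f⟫ + (α * L / 2) ^ 2 * ‖g‖ ^ 2) :=
      mul_nonneg (by positivity) e3
    have h6 : (1 / L) * (‖f‖ ^ 2 - α * L * ⟪g, f⟫ + (α * L / 2) ^ 2 * ‖g‖ ^ 2)
        = (1 / L) * ‖f‖ ^ 2 - α * ⟪g, f⟫ + α ^ 2 * L / 4 * ‖g‖ ^ 2 := by
      field_simp
      ring
    linarith [h5, h6.symm ▸ h5]
  nlinarith [key, hB, hC, sq_nonneg ‖g‖, mul_pos hα hL]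
end

section
/- If f : X → ℝ is convex, differentiable, and L-smooth (‖∇f(x₁) - ∇f(x₂)‖ ≤ L‖x₁ - x₂‖ for all x₁, x₂), then ∇f is (1/L)-co-coercive: ⟨∇f(x₁) - ∇f(x₂), x₁ - x₂⟩ ≥ (1/L)‖∇f(x₁) - ∇f(x₂)‖² for all x₁, x₂ ∈ X. -/
open scoped RealInnerProductSpace

section BHaux

variable {X : Type*} [NormedAddCommGroup X] [InnerProductSpace ℝ X] [CompleteSpace X]

private lemma bh_hasDerivAt_comp_line (f : X → ℝ) (f' : X → X)
    (hdiff : ∀ x, HasGradientAt f (f' x) x) (x v : X) (t : ℝ) :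
    HasDerivAt (fun s : ℝ => f (x + s • v)) ⟪f' (x + t • v), v⟫ t := by
  have hc : HasDerivAt (fun s : ℝ => x + s • v) v t := by
    simpa using ((hasDerivAt_id t).smul_const v).const_add x
  have hF : HasFDerivAt f ((InnerProductSpace.toDual ℝ X) (f' (x + t • v))) (x + t • v) :=
    hasGradientAt_iff_hasFDerivAt.mp (hdiff _)
  have := hF.comp_hasDerivAt t hc
  simp only [InnerProductSpace.toDual_apply_apply] at this
  exact this

private lemma bh_grad_le (f : X → ℝ) (hconv : ConvexOn ℝ Set.univ f) (f' : X → X)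
    (hdiff : ∀ x, HasGradientAt f (f' x) x) (x y : X) :
    f x + ⟪f' x, y - x⟫ ≤ f y := by
  set v := y - x with hv
  have hconv1 : ConvexOn ℝ Set.univ (fun s : ℝ => f (x + s • v)) := by
    have h := hconv.comp_affineMap (AffineMap.lineMap x y : ℝ →ᵃ[ℝ] X)
    have he : (fun s : ℝ => f (x + s • v)) = f ∘ (AffineMap.lineMap x y : ℝ →ᵃ[ℝ] X) := by
      funext s
      simp [AffineMap.lineMap_apply, hv, add_comm]
    rw [he]
    simpa using h
  have hd : HasDerivAt (fun s : ℝ => f (x + s • v)) ⟪f' x, v⟫ 0 := by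
    have := bh_hasDerivAt_comp_line f f' hdiff x v 0
    simpa using this
  have hs := hconv1.le_slope_of_hasDerivAt (Set.mem_univ (0:ℝ)) (Set.mem_univ (1:ℝ))
    one_pos hd
  have h0 : f (x + (0:ℝ) • v) = f x := by simp
  have h1 : f (x + (1:ℝ) • v) = f y := by simp [hv]
  rw [slope_def_field] at hs
  simp only [h0, h1] at hs
  have : ⟪f' x, v⟫ ≤ f y - f x := by simpa using hs
  linarith

private lemma bh_descent (L : ℝ) (hL : 0 < L) (f : X → ℝ) (f' : X → X)
    (hdiff : ∀ x, HasGradientAt f (f' x) x)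
    (hsmooth : ∀ a b : X, ‖f' a - f' b‖ ≤ L * ‖a - b‖) (x y : X) :
    f y ≤ f x + ⟪f' x, y - x⟫ + L / 2 * ‖y - x‖ ^ 2 := by
  set v := y - x with hv
  set φ : ℝ → ℝ := fun t => f (x + t • v) - t * ⟪f' x, v⟫ - L * ‖v‖ ^ 2 / 2 * t ^ 2 with hφ
  have hder : ∀ t : ℝ, HasDerivAt φ (⟪f' (x + t • v) - f' x, v⟫ - L * ‖v‖ ^ 2 * t) t := by
    intro t
    have h1 := bh_hasDerivAt_comp_line f f' hdiff x v t
    have h2 : HasDerivAt (fun t : ℝ => t * ⟪f' x, v⟫) ⟪f' x, v⟫ t := by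
      simpa using (hasDerivAt_id t).mul_const ⟪f' x, v⟫
    have h3 : HasDerivAt (fun t : ℝ => L * ‖v‖ ^ 2 / 2 * t ^ 2) (L * ‖v‖ ^ 2 * t) t := by
      have := (hasDerivAt_pow 2 t).const_mul (L * ‖v‖ ^ 2 / 2)
      refine this.congr_deriv ?_
      ring
    have h4 := (h1.sub h2).sub h3
    refine h4.congr_deriv ?_
    rw [inner_sub_left]
  have hanti : AntitoneOn φ (Set.Icc (0:ℝ) 1) := by
    refine antitoneOn_of_deriv_nonpos (convex_Icc 0 1) ?_ ?_ ?_
    · intro t _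
      exact (hder t).differentiableAt.continuousAt.continuousWithinAt
    · intro t _
      exact (hder t).differentiableAt.differentiableWithinAt
    · intro t ht
      rw [interior_Icc] at ht
      rw [(hder t).deriv]
      have hb : ⟪f' (x + t • v) - f' x, v⟫ ≤ L * ‖v‖ ^ 2 * t := by
        calc ⟪f' (x + t • v) - f' x, v⟫ ≤ ‖f' (x + t • v) - f' x‖ * ‖v‖ :=
              real_inner_le_norm _ _
          _ ≤ (L * ‖x + t • v - x‖) * ‖v‖ :=
              mul_le_mul_of_nonneg_right (hsmooth _ _) (norm_nonneg v)
          _ = L * ‖v‖ ^ 2 * t := by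
              rw [add_sub_cancel_left, norm_smul, Real.norm_eq_abs, abs_of_pos ht.1]
              ring
      linarith
  have hineq := hanti (Set.mem_Icc.mpr ⟨le_refl 0, zero_le_one⟩)
    (Set.mem_Icc.mpr ⟨zero_le_one, le_refl 1⟩) zero_le_one
  have hφ0 : φ 0 = f x := by simp [hφ]
  have hφ1 : φ 1 = f y - ⟪f' x, v⟫ - L * ‖v‖ ^ 2 / 2 := by
    simp [hφ, hv]
  rw [hφ0, hφ1] at hineq
  have hr : L / 2 * ‖v‖ ^ 2 = L * ‖v‖ ^ 2 / 2 := by ring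
  linarith

private lemma bh_strong_lower (L : ℝ) (hL : 0 < L) (f : X → ℝ) (f' : X → X)
    (hconv : ConvexOn ℝ Set.univ f)
    (hdiff : ∀ x, HasGradientAt f (f' x) x)
    (hsmooth : ∀ a b : X, ‖f' a - f' b‖ ≤ L * ‖a - b‖) (x y : X) :
    f x + ⟪f' x, y - x⟫ + 1 / (2 * L) * ‖f' y - f' x‖ ^ 2 ≤ f y := by
  set c := f' x with hc
  set h : X → ℝ := fun z => f z - ⟪c, z⟫ with hh
  set h' : X → X := fun z => f' z - c with hh'
  have hgrad : ∀ z, HasGradientAt h (h' z) z := by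
    intro z
    rw [hasGradientAt_iff_hasFDerivAt]
    have h1 : HasFDerivAt f ((InnerProductSpace.toDual ℝ X) (f' z)) z :=
      hasGradientAt_iff_hasFDerivAt.mp (hdiff z)
    have h2 : HasFDerivAt (fun w : X => ⟪c, w⟫) (innerSL ℝ c) z :=
      (innerSL ℝ c).hasFDerivAt
    have h3 := h1.sub h2
    refine h3.congr_fderiv ?_
    ext w
    simp [hh', InnerProductSpace.toDual_apply_apply, inner_sub_left]
  have hconc : ConcaveOn ℝ Set.univ (fun z : X => ⟪c, z⟫) := by
    refine ⟨convex_univ, ?_⟩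
    intro a _ b _ p q hp hq hpq
    simp [inner_add_right, real_inner_smul_right]
  have hconvh : ConvexOn ℝ Set.univ h := hconv.sub hconc
  have hliph : ∀ a b : X, ‖h' a - h' b‖ ≤ L * ‖a - b‖ := by
    intro a b
    have he : h' a - h' b = f' a - f' b := by
      simp only [hh']
      abel
    rw [he]
    exact hsmooth a b
  have hmin : ∀ w, h x ≤ h w := by
    intro w
    have hgl := bh_grad_le h hconvh h' hgrad x w
    have hx0 : h' x = 0 := by simp [hh', hc]
    rw [hx0] at hgl
    simpa using hgl
  set w := y - (1 / L) • h' y with hw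
  have hdesc := bh_descent L hL h h' hgrad hliph y w
  have hwy : w - y = -((1 / L) • h' y) := by
    rw [hw]; abel
  set N := ‖h' y‖ ^ 2 with hN
  have e1 : ⟪h' y, w - y⟫ = -(1 / L) * N := by
    rw [hwy, inner_neg_right, real_inner_smul_right, real_inner_self_eq_norm_sq]
    ring
  have e2 : ‖w - y‖ ^ 2 = (1 / L) ^ 2 * N := by
    rw [hwy, norm_neg, norm_smul, Real.norm_eq_abs,
      abs_of_pos (by positivity : (0:ℝ) < 1 / L)]
    ring
  rw [e1, e2] at hdesc
  have hkey : L / 2 * ((1 / L) ^ 2 * N) + -(1 / L) * N = -(1 / (2 * L)) * N := by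
    field_simp
    ring
  have hmw := hmin w
  have hfin : h x ≤ h y - 1 / (2 * L) * N := by
    calc h x ≤ h w := hmw
      _ ≤ h y + -(1 / L) * N + L / 2 * ((1 / L) ^ 2 * N) := by linarith
      _ = h y - 1 / (2 * L) * N := by linarith
  have hhx : h x = f x - ⟪c, x⟫ := rfl
  have hhy : h y = f y - ⟪c, y⟫ := rfl
  rw [hhx, hhy] at hfin
  have hiy : ⟪c, y - x⟫ = ⟪c, y⟫ - ⟪c, x⟫ := inner_sub_right _ _ _
  linarith [hfin, hiy]

end BHaux

theorem stmt_13 {X : Type*} [NormedAddCommGroup X] [InnerProductSpace ℝ X]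
    [FiniteDimensional ℝ X]
    (L : ℝ) (hL : 0 < L) (f : X → ℝ) (f' : X → X)
    (hconv : ConvexOn ℝ Set.univ f)
    (hdiff : ∀ x, HasGradientAt f (f' x) x)
    (hsmooth : ∀ x₁ x₂ : X, ‖f' x₁ - f' x₂‖ ≤ L * ‖x₁ - x₂‖) :
    ∀ x₁ x₂ : X, ⟪f' x₁ - f' x₂, x₁ - x₂⟫ ≥ (1 / L) * ‖f' x₁ - f' x₂‖ ^ 2 := by
  intro x₁ x₂
  have s1 := bh_strong_lower L hL f f' hconv hdiff hsmooth x₁ x₂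
  have s2 := bh_strong_lower L hL f f' hconv hdiff hsmooth x₂ x₁
  have hns : ‖f' x₂ - f' x₁‖ = ‖f' x₁ - f' x₂‖ := norm_sub_rev _ _
  rw [hns] at s1
  set N := ‖f' x₁ - f' x₂‖ ^ 2 with hN
  have hMN : 1 / L * N = 1 / (2 * L) * N + 1 / (2 * L) * N := by
    field_simp
    ring
  simp only [inner_sub_left, inner_sub_right] at s1 s2 ⊢
  linarith
end

section
/- Let ε > 0 and a > 0, and define σ_k := ε/(k+1)^a, p_k := 1 - (k/(k+1))^{2a} / (2 - (k/(k+1))^{2a+1}) for k ≥ 1 with p_0 = 1. Suppose a sequence of nonnegative reals v_k satisfies v_0 ≤ ε²/2 and, for k ≥ 1, v_k ≤ p_k ε²/(2(k+1)^{2a}) + (1 - p_k)(v_{k-1} + ε²/(2(k+1)^{2a+1})). Then v_k ≤ σ_k² = ε²/(k+1)^{2a} for all k ≥ 0. -/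
theorem stmt_17 (ε a : ℝ) (hε : 0 < ε) (ha : 0 < a)
    (p v : ℕ → ℝ) (hp0 : p 0 = 1)
    (hp : ∀ k : ℕ, 1 ≤ k →
      p k = 1 - ((k : ℝ) / ((k : ℝ) + 1)) ^ (2 * a) /
        (2 - ((k : ℝ) / ((k : ℝ) + 1)) ^ (2 * a + 1)))
    (hv : ∀ k, 0 ≤ v k)
    (hv0 : v 0 ≤ ε ^ 2 / 2)
    (hvrec : ∀ k : ℕ, 1 ≤ k →
      v k ≤ p k * ε ^ 2 / (2 * ((k : ℝ) + 1) ^ (2 * a)) +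
        (1 - p k) * (v (k - 1) + ε ^ 2 / (2 * ((k : ℝ) + 1) ^ (2 * a + 1)))) :
    ∀ k : ℕ, v k ≤ ε ^ 2 / ((k : ℝ) + 1) ^ (2 * a) := by
  intro k
  induction k with
  | zero =>
    simp only [Nat.cast_zero, zero_add, Real.one_rpow]
    have : ε ^ 2 / 2 ≤ ε ^ 2 / 1 := by
      apply div_le_div_of_nonneg_left (by positivity) one_pos (by norm_num)
    linarith [hv0]
  | succ k ih =>
    set y : ℝ := (k : ℝ) + 1 with hy_def
    have hy : 0 < y := by positivity
    have hy1 : 0 < y + 1 := by positivity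
    have hcast : ((k + 1 : ℕ) : ℝ) = y := by push_cast; ring
    set K : ℝ := y ^ (2 * a) with hK_def
    set A : ℝ := (y + 1) ^ (2 * a) with hA_def
    have hKpos : 0 < K := Real.rpow_pos_of_pos hy _
    have hApos : 0 < A := Real.rpow_pos_of_pos hy1 _
    have hKA : K < A := Real.rpow_lt_rpow hy.le (by linarith) (by linarith)
    -- rpow relations
    have hK' : y ^ (2 * a + 1) = K * y := by
      rw [Real.rpow_add hy, Real.rpow_one]
    have hA' : (y + 1) ^ (2 * a + 1) = A * (y + 1) := by
      rw [Real.rpow_add hy1, Real.rpow_one]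
    have hdiv1 : (y / (y + 1)) ^ (2 * a) = K / A :=
      Real.div_rpow hy.le hy1.le (2 * a)
    have hdiv2 : (y / (y + 1)) ^ (2 * a + 1) = K * y / (A * (y + 1)) := by
      rw [Real.div_rpow hy.le hy1.le, hK', hA']
    -- D and q
    set D : ℝ := 2 * A * (y + 1) - K * y with hD_def
    have hDpos : 0 < D := by nlinarith
    have hq : 1 - p (k + 1) = K * (y + 1) / D := by
      rw [hp (k + 1) (Nat.le_add_left 1 k), hcast, hdiv1, hdiv2]
      have h2 : (2 : ℝ) - K * y / (A * (y + 1)) = D / (A * (y + 1)) := by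
        field_simp
        ring
      rw [h2]
      field_simp
      ring
    have hqnonneg : 0 ≤ K * (y + 1) / D := by positivity
    -- the recursion
    have hrec := hvrec (k + 1) (Nat.le_add_left 1 k)
    rw [hcast] at hrec
    simp only [Nat.add_sub_cancel] at hrec
    have hp1 : p (k + 1) = 1 - K * (y + 1) / D := by linarith
    rw [hp1] at hrec
    have hsimp : (1 : ℝ) - (1 - K * (y + 1) / D) = K * (y + 1) / D := by ring
    rw [hsimp, ← hA_def, hA'] at hrec
    -- induction hypothesis gives v k ≤ ε² / K
    have hih : v k ≤ ε ^ 2 / K := ih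
    -- goal rewriting
    show v (k + 1) ≤ ε ^ 2 / (((k + 1 : ℕ) : ℝ) + 1) ^ (2 * a)
    rw [hcast, ← hA_def]
    -- final algebra
    have key : (1 - K * (y + 1) / D) * ε ^ 2 / (2 * A) +
        K * (y + 1) / D * (ε ^ 2 / K + ε ^ 2 / (2 * (A * (y + 1)))) = ε ^ 2 / A := by
      field_simp
      ring
    calc v (k + 1) ≤ (1 - K * (y + 1) / D) * ε ^ 2 / (2 * A) +
          K * (y + 1) / D * (v k + ε ^ 2 / (2 * (A * (y + 1)))) := hrec
      _ ≤ (1 - K * (y + 1) / D) * ε ^ 2 / (2 * A) +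
          K * (y + 1) / D * (ε ^ 2 / K + ε ^ 2 / (2 * (A * (y + 1)))) := by
            gcongr
      _ = ε ^ 2 / A := key
end
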